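/- Let A ⊆ {1,…,N} be nonempty and let C, C' ⊆ ℤ be finite subsets with C ∩ C' ≠ ∅, r(C) ≤ (N+1)/2 and r(C') ≤ (N+1)/2. Then there exists at most one a ∈ A such that the symmetric difference C △ C' is a proper subset of s_a(A) and s_a(A) ⊆ C ∪ C'. (The uniqueness claim in Step 1 of the proof of the locality theorem in the Supplemental Material.) -/
import Mathlib


/-- `projN N i` is the unique element of `{1, …, N}` congruent to `i` mod `N`. -/
def projN (N i : ℤ) : ℤ := (i - 1) % N + 1

/-- The cut `s_n` of the chain: `s_n i = i` if `i ≥ n`, and `i + N` if `i < n`. -/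
def cutN (N n i : ℤ) : ℤ := if n ≤ i then i else i + N

/-- The range `r(A) = max A - min A + 1` of a finite nonempty set, with `r(∅) = 0`. -/
def rng (A : Finset ℤ) : ℤ := if h : A.Nonempty then A.max' h - A.min' h + 1 else 0

/-- `r_N(A) = min over n ∈ {1,…,N} of r(s_n(A))`. -/
noncomputable def rN (N : ℤ) (A : Finset ℤ) : ℤ :=
  sInf ((fun n => rng (A.image (cutN N n))) '' Set.Icc 1 N)

lemma sub_le_rng {C : Finset ℤ} {x y : ℤ} (hx : x ∈ C) (hy : y ∈ C) :
    x - y ≤ rng C - 1 := by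
  have h : C.Nonempty := ⟨x, hx⟩
  rw [rng, dif_pos h]
  have := C.le_max' x hx
  have := C.min'_le y hy
  omega

/-- uniqueness claim in Step 1 of the locality theorem: For
nonempty `A ⊆ {1,…,N}` and finite `C, C' ⊆ ℤ` with `C ∩ C' ≠ ∅` and
`r(C), r(C') ≤ (N+1)/2`, there is at most one `a ∈ A` with
`C △ C' ⊊ s_a(A) ⊆ C ∪ C'`. -/
theorem unique_cut_site (N : ℤ) (hN : 1 ≤ N)
    (A : Finset ℤ) (hAne : A.Nonempty) (hA : A ⊆ Finset.Icc 1 N)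
    (C C' : Finset ℤ) (hCC' : (C ∩ C').Nonempty)
    (hC : 2 * rng C ≤ N + 1) (hC' : 2 * rng C' ≤ N + 1) :
    ∀ a₁ ∈ A, ∀ a₂ ∈ A,
      ((C ∪ C') \ (C ∩ C') ⊂ A.image (cutN N a₁) ∧ A.image (cutN N a₁) ⊆ C ∪ C') →
      ((C ∪ C') \ (C ∩ C') ⊂ A.image (cutN N a₂) ∧ A.image (cutN N a₂) ⊆ C ∪ C') →
      a₁ = a₂ := by
  obtain ⟨p, hp⟩ := hCC'
  have hpC : p ∈ C := (Finset.mem_inter.1 hp).1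
  have hpC' : p ∈ C' := (Finset.mem_inter.1 hp).2
  have bound : ∀ x ∈ C ∪ C', ∀ y ∈ C ∪ C', x - y ≤ N - 1 := by
    intro x hx y hy
    have h1 : x - p ≤ rng C - 1 ∨ x - p ≤ rng C' - 1 := by
      rcases Finset.mem_union.1 hx with h | h
      · exact Or.inl (sub_le_rng h hpC)
      · exact Or.inr (sub_le_rng h hpC')
    have h2 : p - y ≤ rng C - 1 ∨ p - y ≤ rng C' - 1 := by
      rcases Finset.mem_union.1 hy with h | h
      · exact Or.inl (sub_le_rng hpC h)
      · exact Or.inr (sub_le_rng hpC' h)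
    have hrC : 1 ≤ rng C := by
      rw [rng, dif_pos ⟨p, hpC⟩]
      have := Finset.min'_le C p hpC
      have := Finset.le_max' C p hpC
      omega
    have hrC' : 1 ≤ rng C' := by
      rw [rng, dif_pos ⟨p, hpC'⟩]
      have := Finset.min'_le C' p hpC'
      have := Finset.le_max' C' p hpC'
      omega
    omega
  have key : ∀ a b : ℤ, a ∈ A → b ∈ A →
      A.image (cutN N a) ⊆ C ∪ C' → A.image (cutN N b) ⊆ C ∪ C' → a < b → False := by
    intro a b ha hb hsa hsb hab
    have h1 : a ∈ A.image (cutN N a) :=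
      Finset.mem_image.2 ⟨a, ha, by simp [cutN]⟩
    have h2 : a + N ∈ A.image (cutN N b) :=
      Finset.mem_image.2 ⟨a, ha, by simp only [cutN, if_neg (by omega : ¬ b ≤ a)]⟩
    have := bound (a + N) (hsb h2) a (hsa h1)
    omega
  intro a₁ h₁ a₂ h₂ hc₁ hc₂
  rcases lt_trichotomy a₁ a₂ with h | h | h
  · exact absurd (key a₁ a₂ h₁ h₂ hc₁.2 hc₂.2 h) not_false
  · exact h
  · exact absurd (key a₂ a₁ h₂ h₁ hc₂.2 hc₁.2 h) not_false
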